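/- Consider the Bin-Packing game determined by integers n ≥ 1, k ≥ 1, B ≥ 1 and item values v(1),…,v(n). This game admits a connected Nash stable partition if and only if there exists a function f : {1,…,n} → {1,…,k} such that Σ_{j : f(j)=i} v(j) ≤ B for every i ∈ {1,…,k}. -/

import Mathlib

/-- A partition of the finite vertex set `V`, represented by the function sending each
vertex to its part. -/
structure ASHGPart (V : Type*) [DecidableEq V] where
  part : V → Finset V
  mem_part : ∀ v, v ∈ part v
  eq_of_mem : ∀ u v, u ∈ part v → part u = part v

/-- The utility of vertex `v` in coalition `S`: the sum of `w v u` over `u ∈ S`, `u ≠ v`. -/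
def util {V : Type*} [DecidableEq V] (w : V → V → ℤ) (v : V) (S : Finset V) : ℤ :=
  ∑ u ∈ S.erase v, w v u

/-- A partition is Nash stable if every vertex has nonnegative utility in its own part and
does not prefer any other part of the partition. -/
def NashStable {V : Type*} [DecidableEq V] (w : V → V → ℤ) (π : ASHGPart V) : Prop :=
  ∀ v : V, 0 ≤ util w v (π.part v) ∧ ∀ x : V, util w v (π.part x) ≤ util w v (π.part v)


/-- The underlying (undirected simple) graph of the game: distinct `u, v` are adjacent
iff `w u v ≠ 0` or `w v u ≠ 0`. -/
def underlying {V : Type*} (w : V → V → ℤ) : SimpleGraph V where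
  Adj u v := u ≠ v ∧ (w u v ≠ 0 ∨ w v u ≠ 0)
  symm := ⟨fun u v h => ⟨h.1.symm, h.2.symm⟩⟩
  loopless := ⟨fun v h => h.1 rfl⟩

/-- A Nash stable partition is connected if every part induces a connected subgraph of
the underlying graph. -/
def ConnNashStable {V : Type*} [DecidableEq V] (w : V → V → ℤ) (π : ASHGPart V) : Prop :=
  NashStable w π ∧ ∀ x : V, ((underlying w).induce (↑(π.part x) : Set V)).Connected

/-- The vertex set of the Bin-Packing game: `n` item vertices, `k` bin vertices,
and `k` helper vertices. -/
inductive BPV (n k : ℕ) where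
  | item : Fin n → BPV n k
  | bin : Fin k → BPV n k
  | helper : Fin k → BPV n k
  deriving DecidableEq, Fintype

/-- The weights of the Bin-Packing game. -/
def bpw (n k : ℕ) (B : ℤ) (v : Fin n → ℤ) : BPV n k → BPV n k → ℤ
  | .bin i, .helper i' => if i = i' then B else 0
  | .item _, .bin _ => 1
  | .bin _, .item j => -(v j)
  | _, _ => 0

namespace BPProof

variable {n k : ℕ}

/-- the sorting equivalence -/
def bpvEquiv (n k : ℕ) : BPV n k ≃ (Fin n ⊕ (Fin k ⊕ Fin k)) where
  toFun x := match x with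
    | .item j => .inl j
    | .bin i => .inr (.inl i)
    | .helper i => .inr (.inr i)
  invFun x := match x with
    | .inl j => .item j
    | .inr (.inl i) => .bin i
    | .inr (.inr i) => .helper i
  left_inv := by rintro (j|i|i) <;> rfl
  right_inv := by rintro (j|i|i) <;> rfl

lemma sum_bpv (h : BPV n k → ℤ) :
    ∑ u : BPV n k, h u =
      (∑ j : Fin n, h (.item j)) + (∑ i : Fin k, h (.bin i)) + (∑ i : Fin k, h (.helper i)) := by
  rw [(Fintype.sum_equiv (bpvEquiv n k).symm (fun b => h ((bpvEquiv n k).symm b)) h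
    (fun _ => rfl)).symm]
  rw [Fintype.sum_sum_type, Fintype.sum_sum_type]
  simp [bpvEquiv, add_assoc]

lemma bpw_self (B : ℤ) (v : Fin n → ℤ) (x : BPV n k) : bpw n k B v x x = 0 := by
  cases x <;> simp [bpw]

lemma util_eq_sum (B : ℤ) (v : Fin n → ℤ) (x : BPV n k) (S : Finset (BPV n k)) :
    util (bpw n k B v) x S = ∑ u ∈ S, bpw n k B v x u :=
  Finset.sum_erase S (bpw_self B v x)

lemma util_helper (B : ℤ) (v : Fin n → ℤ) (i : Fin k) (S : Finset (BPV n k)) :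
    util (bpw n k B v) (.helper i) S = 0 := by
  rw [util_eq_sum]
  apply Finset.sum_eq_zero
  rintro (j|i'|i') _ <;> rfl

def bpg {n k : ℕ} (f : Fin n → Fin k) : BPV n k → Fin k
  | .item j => f j
  | .bin i => i
  | .helper i => i

lemma util_item (B : ℤ) (v : Fin n → ℤ) (f : Fin n → Fin k) (j : Fin n) (i' : Fin k) :
    util (bpw n k B v) (.item j) (Finset.univ.filter fun y => bpg f y = i') = 1 := by
  rw [util_eq_sum, Finset.sum_filter, sum_bpv]
  have e : ∀ j, bpg f (.item j) = f j := fun _ => rfl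
  have e2 : ∀ j : Fin k, bpg (n := n) f (.bin j) = j := fun _ => rfl
  have e3 : ∀ j : Fin k, bpg (n := n) f (.helper j) = j := fun _ => rfl
  simp only [e, e2, e3]
  simp [bpw, Finset.sum_ite_eq']

lemma util_bin (B : ℤ) (v : Fin n → ℤ) (f : Fin n → Fin k) (i i' : Fin k) :
    util (bpw n k B v) (.bin i) (Finset.univ.filter fun y => bpg f y = i') =
      (if i = i' then B else 0) - ∑ j ∈ Finset.univ.filter (fun j => f j = i'), v j := by
  rw [util_eq_sum, Finset.sum_filter, sum_bpv]
  have e : ∀ j, bpg f (.item j) = f j := fun _ => rfl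
  have e2 : ∀ j : Fin k, bpg (n := n) f (.bin j) = j := fun _ => rfl
  have e3 : ∀ j : Fin k, bpg (n := n) f (.helper j) = j := fun _ => rfl
  simp only [e, e2, e3]
  simp [bpw, Finset.sum_ite_eq', Finset.sum_filter, sub_eq_add_neg,
    ← Finset.sum_neg_distrib, apply_ite Neg.neg]
  ring


end BPProof

open BPProof in
theorem stmt_8 (n k : ℕ) (B : ℤ) (hn : 1 ≤ n) (hk : 1 ≤ k) (hB : 1 ≤ B)
    (v : Fin n → ℤ) (hv : ∀ j, 1 ≤ v j) (hsum : ∑ j, v j = (k : ℤ) * B) :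
    (∃ π : ASHGPart (BPV n k), ConnNashStable (bpw n k B v) π) ↔
    (∃ f : Fin n → Fin k, ∀ i : Fin k,
      ∑ j ∈ Finset.univ.filter (fun j => f j = i), v j ≤ B) := by
  constructor
  · -- forward: connected Nash stable ⇒ packing
    rintro ⟨π, hst, -⟩
    -- every item's part contains a bin
    have key : ∀ j : Fin n, ∃ i : Fin k, BPV.bin i ∈ π.part (.item j) := by
      intro j
      by_contra h
      push_neg at h
      have hown : util (bpw n k B v) (.item j) (π.part (.item j)) = 0 := by
        apply Finset.sum_eq_zero
        intro u hu
        have hu' := Finset.mem_of_mem_erase hu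
        match u with
        | .item j' => rfl
        | .bin i => exact absurd hu' (h i)
        | .helper i => rfl
      set i₀ : Fin k := ⟨0, hk⟩
      have hother : (1 : ℤ) ≤ util (bpw n k B v) (.item j) (π.part (.bin i₀)) := by
        have hmem : (BPV.bin i₀ : BPV n k) ∈ (π.part (.bin i₀)).erase (.item j) := by
          exact Finset.mem_erase.2 ⟨by simp, π.mem_part _⟩
        have := Finset.single_le_sum (f := fun u => bpw n k B v (.item j) u)
          (fun u _ => by match u with
            | .item _ => exact le_refl 0
            | .bin _ => exact zero_le_one
            | .helper _ => exact le_refl 0) hmem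
        simpa [bpw, util] using this
      have := (hst (.item j)).2 (.bin i₀)
      rw [hown] at this
      omega
    choose f hf using key
    refine ⟨f, fun i => ?_⟩
    -- items assigned to i live in part of bin i
    have hfin : ∀ j : Fin n, BPV.item j ∈ π.part (.bin (f j)) := by
      intro j
      rw [π.eq_of_mem _ _ (hf j)]
      exact π.mem_part _
    set S := π.part (.bin i) with hS
    set T := S.erase (.bin i) with hT
    set A : Finset (Fin n) := Finset.univ.filter (fun j => BPV.item j ∈ S) with hA
    set M : Finset (BPV n k) := A.image BPV.item with hM
    have hsub : M ⊆ T := by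
      intro u hu
      rw [hM, Finset.mem_image] at hu
      obtain ⟨j, hj, rfl⟩ := hu
      rw [hA, Finset.mem_filter] at hj
      exact Finset.mem_erase.2 ⟨by simp, hj.2⟩
    have hMsum : ∑ u ∈ M, bpw n k B v (.bin i) u = -∑ j ∈ A, v j := by
      rw [hM, Finset.sum_image (by intro a _ b _ h; simpa using h)]
      simp [bpw]
    have hrest : ∑ u ∈ T \ M, bpw n k B v (.bin i) u ≤ B := by
      calc ∑ u ∈ T \ M, bpw n k B v (.bin i) u
          ≤ ∑ u ∈ T \ M, (if u = .helper i then B else 0) := by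
            apply Finset.sum_le_sum
            intro u hu
            cases u with
            | item j =>
              exfalso
              have h1 : BPV.item j ∈ T := (Finset.mem_sdiff.1 hu).1
              have h2 : BPV.item j ∈ S := Finset.mem_of_mem_erase h1
              have : (BPV.item j : BPV n k) ∈ M := by
                rw [hM, Finset.mem_image]
                exact ⟨j, by rw [hA]; simp [h2], rfl⟩
              exact (Finset.mem_sdiff.1 hu).2 this
            | bin i' => simp [bpw]
            | helper i' =>
              show (if i = i' then B else 0) ≤
                if (BPV.helper i' : BPV n k) = BPV.helper i then B else 0
              simp only [BPV.helper.injEq]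
              split_ifs <;> first | omega | simp_all
        _ ≤ B := by
            rw [Finset.sum_ite_eq' (T \ M) (BPV.helper i) (fun _ => B)]
            split <;> omega
    have h0 : 0 ≤ util (bpw n k B v) (.bin i) S := (hst (.bin i)).1
    rw [util_eq_sum] at h0
    have hsplit : ∑ u ∈ T \ M, bpw n k B v (.bin i) u + ∑ u ∈ M, bpw n k B v (.bin i) u
        = ∑ u ∈ T, bpw n k B v (.bin i) u := Finset.sum_sdiff hsub
    have hTS : ∑ u ∈ T, bpw n k B v (.bin i) u = ∑ u ∈ S, bpw n k B v (.bin i) u :=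
      Finset.sum_erase S (bpw_self B v _)
    have hAB : ∑ j ∈ A, v j ≤ B := by omega
    refine le_trans (Finset.sum_le_sum_of_subset_of_nonneg ?_ (fun j _ _ => by linarith [hv j])) hAB
    intro j hj
    rw [Finset.mem_filter] at hj
    rw [hA, Finset.mem_filter]
    refine ⟨Finset.mem_univ _, ?_⟩
    rw [hS, ← hj.2]
    exact hfin j
  · -- backward: packing ⇒ connected Nash stable
    rintro ⟨f, hf⟩
    refine ⟨⟨fun x => Finset.univ.filter (fun y => bpg f y = bpg f x), fun x => by simp,
      fun a b hab => ?_⟩, ?_, ?_⟩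
    · rw [Finset.mem_filter] at hab
      simp only [hab.2]
    · -- Nash stability
      intro x
      constructor
      · match x with
        | .item j =>
          show 0 ≤ util (bpw n k B v) (.item j) (Finset.univ.filter fun y => bpg f y = f j)
          rw [util_item]
          norm_num
        | .bin i =>
          show 0 ≤ util (bpw n k B v) (.bin i) (Finset.univ.filter fun y => bpg f y = i)
          rw [util_bin, if_pos rfl]
          have := hf i
          omega
        | .helper i =>
          show 0 ≤ util (bpw n k B v) (.helper i) (Finset.univ.filter fun y => bpg f y = i)
          rw [util_helper]
      · intro y
        match x with
        | .item j =>
          show util (bpw n k B v) (.item j) (Finset.univ.filter fun z => bpg f z = bpg f y) ≤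
            util (bpw n k B v) (.item j) (Finset.univ.filter fun z => bpg f z = f j)
          rw [util_item, util_item]
        | .bin i =>
          show util (bpw n k B v) (.bin i) (Finset.univ.filter fun z => bpg f z = bpg f y) ≤
            util (bpw n k B v) (.bin i) (Finset.univ.filter fun z => bpg f z = i)
          rw [util_bin, util_bin, if_pos rfl]
          have h1 := hf i
          have h2 : 0 ≤ ∑ j ∈ Finset.univ.filter (fun j => f j = bpg f y), v j :=
            Finset.sum_nonneg (fun j _ => by linarith [hv j])
          by_cases h : i = bpg f y
          · subst h; omega
          · rw [if_neg h]; omega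
        | .helper i =>
          show util (bpw n k B v) (.helper i) (Finset.univ.filter fun z => bpg f z = bpg f y) ≤
            util (bpw n k B v) (.helper i) (Finset.univ.filter fun z => bpg f z = i)
          rw [util_helper, util_helper]
    · -- connectivity
      intro x
      show ((underlying (bpw n k B v)).induce
        ((Finset.univ.filter (fun y => bpg f y = bpg f x) : Finset (BPV n k)) : Set (BPV n k))).Connected
      have hbin : (BPV.bin (bpg f x) : BPV n k) ∈
          Finset.univ.filter (fun y => bpg f y = bpg f x) := by
        exact Finset.mem_filter.2 ⟨Finset.mem_univ _, rfl⟩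
      have hreach : ∀ a : ((Finset.univ.filter (fun y => bpg f y = bpg f x) :
            Finset (BPV n k)) : Set (BPV n k)),
          ((underlying (bpw n k B v)).induce _).Reachable a ⟨.bin (bpg f x), hbin⟩ := by
        rintro ⟨a, ha⟩
        have ha' : bpg f a = bpg f x := by
          simp only [Finset.coe_filter, Set.mem_setOf_eq] at ha
          exact ha.2
        match a with
        | .item j =>
          apply SimpleGraph.Adj.reachable
          show (underlying (bpw n k B v)).Adj (.item j) (.bin (bpg f x))
          exact ⟨by simp, Or.inl (by simp [bpw])⟩
        | .bin i'' =>
          have : i'' = bpg f x := ha'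
          subst this
          exact SimpleGraph.Reachable.refl _
        | .helper i'' =>
          have h2 : i'' = bpg f x := ha'
          apply SimpleGraph.Adj.reachable
          show (underlying (bpw n k B v)).Adj (.helper i'') (.bin (bpg f x))
          refine ⟨by simp, Or.inr ?_⟩
          rw [show bpw n k B v (.bin (bpg f x)) (.helper i'') = if bpg f x = i'' then B else 0
            from rfl, h2, if_pos rfl]
          omega
      have hne : Nonempty ((Finset.univ.filter (fun y => bpg f y = bpg f x) :
          Finset (BPV n k)) : Set (BPV n k)) := ⟨⟨.bin (bpg f x), hbin⟩⟩
      exact ⟨fun a b => (hreach a).trans (hreach b).symm⟩
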